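/- For every bipartite PPT state ρ on ℂ^{dA}⊗ℂ^{dB}, the down-arrow conditional min-entropy is nonnegative: S↓_∞(A|B)_ρ ≥ 0. -/

import Mathlib

open scoped ComplexOrder Kronecker
open Matrix

noncomputable section

/-- Square complex matrices indexed by `ι`. -/
abbrev Mat (ι : Type) : Type := Matrix ι ι ℂ

/-- A quantum state: a positive semidefinite matrix of trace one. -/
def IsState {ι : Type} [Fintype ι] (ρ : Mat ι) : Prop :=
  ρ.PosSemidef ∧ ρ.trace = 1

/-- Max-relative entropy `D_∞(ρ‖σ) = log₂ inf {λ ≥ 0 : λ•σ − ρ ⪰ 0}` as an extended real;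
it is `+∞` (`sInf ∅ = ⊤`) when no such `λ` exists. -/
def Dmax {ι : Type} [Fintype ι] (ρ σ : Mat ι) : EReal :=
  sInf {x : EReal | ∃ l : ℝ, 0 ≤ l ∧ ((l : ℂ) • σ - ρ).PosSemidef ∧
    x = ((Real.logb 2 l : ℝ) : EReal)}

/-- Partial trace over the first tensor factor. -/
def trFst {ιA ιB : Type} [Fintype ιA] (ρ : Matrix (ιA × ιB) (ιA × ιB) ℂ) : Mat ιB :=
  Matrix.of fun i j => ∑ k : ιA, ρ (k, i) (k, j)

/-- Partial trace over the second tensor factor. -/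
def trSnd {ιA ιB : Type} [Fintype ιB] (ρ : Matrix (ιA × ιB) (ιA × ιB) ℂ) : Mat ιA :=
  Matrix.of fun i j => ∑ k : ιB, ρ (i, k) (j, k)

/-- Conditional min-entropy `S_∞(A|B)_ρ := −inf over states σ on B of D_∞(ρ‖1_A⊗σ)`. -/
def condMin {ιA ιB : Type} [Fintype ιA] [DecidableEq ιA] [Fintype ιB]
    (ρ : Matrix (ιA × ιB) (ιA × ιB) ℂ) : EReal :=
  -(⨅ σ : {σ : Mat ιB // IsState σ}, Dmax ρ ((1 : Mat ιA) ⊗ₖ σ.1))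

/-- `S↓_∞(A|B)_ρ := −D_∞(ρ‖1_A⊗ρ_B)` with `ρ_B = tr_A ρ`. -/
def condMinDown {ιA ιB : Type} [Fintype ιA] [DecidableEq ιA] [Fintype ιB]
    (ρ : Matrix (ιA × ιB) (ιA × ιB) ℂ) : EReal :=
  -(Dmax ρ ((1 : Mat ιA) ⊗ₖ trFst ρ))

/-- The (unnormalized) Choi matrix of a linear map of matrices. -/
def choiMatrix {ι κ : Type} [DecidableEq ι] (L : Mat ι →ₗ[ℂ] Mat κ) :
    Matrix (ι × κ) (ι × κ) ℂ :=
  Matrix.of fun p q => L (Matrix.single p.1 q.1 1) p.2 q.2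

/-- A quantum channel: a linear map that is completely positive (positive semidefinite Choi
matrix) and trace preserving. -/
def IsChannel {ι κ : Type} [Fintype ι] [DecidableEq ι] [Fintype κ]
    (L : Mat ι →ₗ[ℂ] Mat κ) : Prop :=
  (choiMatrix L).PosSemidef ∧ ∀ X : Mat ι, (L X).trace = X.trace

/-- The Choi state `Φ^L = (id⊗L)(Φ_d)` of a linear map of matrices. -/
def choiState {ι κ : Type} [Fintype ι] [DecidableEq ι] (L : Mat ι →ₗ[ℂ] Mat κ) :
    Matrix (ι × κ) (ι × κ) ℂ :=
  ((Fintype.card ι : ℂ))⁻¹ • choiMatrix L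

/-- The Choi state of a bipartite channel `N : A'B' → AB`, re-indexed across
the cut `R_A A : R_B B`. -/
def biChoiState {ιA' ιB' κA κB : Type} [Fintype ιA'] [DecidableEq ιA']
    [Fintype ιB'] [DecidableEq ιB'] (N : Mat (ιA' × ιB') →ₗ[ℂ] Mat (κA × κB)) :
    Matrix ((ιA' × κA) × (ιB' × κB)) ((ιA' × κA) × (ιB' × κB)) ℂ :=
  Matrix.of fun p q =>
    choiState N ((p.1.1, p.2.1), (p.1.2, p.2.2)) ((q.1.1, q.2.1), (q.1.2, q.2.2))

/-- Conditional min-entropy of a bipartite channel: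
`S_∞[A|B]_N := −inf over channels Q : B'→B of D_∞(Φ^N ‖ 1_{R_A A} ⊗ Φ^Q) − log₂|A'|`. -/
def chanCondMin {ιA' ιB' κA κB : Type}
    [Fintype ιA'] [DecidableEq ιA'] [Fintype ιB'] [DecidableEq ιB']
    [Fintype κA] [DecidableEq κA] [Fintype κB] [DecidableEq κB]
    (N : Mat (ιA' × ιB') →ₗ[ℂ] Mat (κA × κB)) : EReal :=
  (-(⨅ Q : {Q : Mat ιB' →ₗ[ℂ] Mat κB // IsChannel Q},
      Dmax (biChoiState N) ((1 : Mat (ιA' × κA)) ⊗ₖ choiState Q.1)))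
    - ((Real.logb 2 (Fintype.card ιA' : ℝ) : ℝ) : EReal)

/-- Rank-one projector `|v⟩⟨v|` associated with a vector. -/
def outer {ι : Type} (v : ι → ℂ) : Mat ι := Matrix.vecMulVec v (star v)

/-- Vectorization `vec(V) := ∑ i, e_i ⊗ V e_i` of a matrix `V : ℂ^ι → ℂ^κ`. -/
def vecRect {ι κ : Type} (V : Matrix κ ι ℂ) : ι × κ → ℂ := fun p => V p.2 p.1

/-- A maximally entangled state on `ι1 × ι2`: `|φ⟩⟨φ|` with
`|φ⟩ = (1/√d) ∑ i, e_i ⊗ f_i` for orthonormal families `e`, `f`, `d = min(|ι1|,|ι2|)`. -/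
def IsMaxEntangled {ι1 ι2 : Type} [Fintype ι1] [Fintype ι2]
    (Φ : Matrix (ι1 × ι2) (ι1 × ι2) ℂ) : Prop :=
  ∃ (e : Fin (min (Fintype.card ι1) (Fintype.card ι2)) → ι1 → ℂ)
    (f : Fin (min (Fintype.card ι1) (Fintype.card ι2)) → ι2 → ℂ),
    (∀ i j, ∑ x : ι1, (starRingEnd ℂ) (e i x) * e j x = if i = j then 1 else 0) ∧
    (∀ i j, ∑ x : ι2, (starRingEnd ℂ) (f i x) * f j x = if i = j then 1 else 0) ∧
    Φ = outer (fun p => (((Real.sqrt (min (Fintype.card ι1) (Fintype.card ι2) : ℝ))⁻¹ : ℝ) : ℂ) *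
      ∑ i, e i p.1 * f i p.2)

/-- Partial transpose over the second tensor factor. -/
def ptransposeSnd {ιA ιB : Type} (ρ : Matrix (ιA × ιB) (ιA × ιB) ℂ) :
    Matrix (ιA × ιB) (ιA × ιB) ℂ :=
  Matrix.of fun p q => ρ (p.1, q.2) (q.1, p.2)

/-- A bipartite state is PPT if its partial transpose is positive semidefinite. -/
def IsPPT {ιA ιB : Type} [Fintype ιA] [Fintype ιB]
    (ρ : Matrix (ιA × ιB) (ιA × ιB) ℂ) : Prop :=
  (ptransposeSnd ρ).PosSemidef

/-- Conjugation channel `X ↦ W X Wᴴ`. -/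
def conjMap {ι κ : Type} [Fintype ι] (W : Matrix κ ι ℂ) : Mat ι →ₗ[ℂ] Mat κ where
  toFun X := W * X * Wᴴ
  map_add' X Y := by simp [Matrix.mul_add, Matrix.add_mul]
  map_smul' c X := by simp [Matrix.mul_smul, Matrix.smul_mul]

/-- The controlled unitary matrix `∑ j, |j⟩⟨j| ⊗ U_j`. -/
def ctrlU {n m : ℕ} (U : Fin n → Mat (Fin m)) : Mat (Fin n × Fin m) :=
  Matrix.of fun p q => (if p.1 = q.1 then 1 else 0) * U p.1 p.2 q.2

/-- The replacer channel `X ↦ tr(X) • γ`. -/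
def replacer {ι κ : Type} [Fintype ι] (γ : Mat κ) : Mat ι →ₗ[ℂ] Mat κ where
  toFun X := X.trace • γ
  map_add' X Y := by simp [Matrix.trace_add, add_smul]
  map_smul' c X := by simp [Matrix.trace_smul, mul_smul]

/-- The maximally mixed state `π_m = 1_m / m`. -/
def uniformState (m : ℕ) : Mat (Fin m) := ((m : ℂ))⁻¹ • (1 : Mat (Fin m))

/-- Tensor product of two linear maps of matrices. -/
def tensorL {ι1 κ1 ι2 κ2 : Type} [Fintype ι1] [DecidableEq ι1]
    (L1 : Mat ι1 →ₗ[ℂ] Mat κ1) (L2 : Mat ι2 →ₗ[ℂ] Mat κ2) :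
    Mat (ι1 × ι2) →ₗ[ℂ] Mat (κ1 × κ2) where
  toFun X := Matrix.of fun p q =>
    ∑ i1 : ι1, ∑ j1 : ι1,
      L1 (Matrix.single i1 j1 1) p.1 q.1 *
        L2 (Matrix.of fun i2 j2 => X (i1, i2) (j1, j2)) p.2 q.2
  map_add' X Y := by
    ext p q
    have h : ∀ i1 j1 : ι1,
        (Matrix.of fun i2 j2 => X (i1, i2) (j1, j2) + Y (i1, i2) (j1, j2)) =
          (Matrix.of fun i2 j2 => X (i1, i2) (j1, j2)) +
            (Matrix.of fun i2 j2 => Y (i1, i2) (j1, j2)) := by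
      intro i1 j1; ext i2 j2; simp
    simp only [Matrix.add_apply, Matrix.of_apply, h, map_add, mul_add,
      Finset.sum_add_distrib]
  map_smul' c X := by
    ext p q
    have h : ∀ i1 j1 : ι1,
        (Matrix.of fun i2 j2 => c * X (i1, i2) (j1, j2)) =
          c • (Matrix.of fun i2 j2 => X (i1, i2) (j1, j2)) := by
      intro i1 j1; ext i2 j2; simp
    simp only [Matrix.smul_apply, smul_eq_mul, Matrix.of_apply, RingHom.id_apply, h,
      LinearMap.map_smul]
    rw [Finset.mul_sum]
    refine Finset.sum_congr rfl fun i1 _ => ?_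
    rw [Finset.mul_sum]
    refine Finset.sum_congr rfl fun j1 _ => ?_
    ring


/-- Square root of a positive semidefinite matrix (junk value `0` otherwise). -/
def matSqrt {ι : Type} [Fintype ι] [DecidableEq ι] (M : Mat ι) : Mat ι :=
  letI := Classical.dec M.PosSemidef
  if h : M.PosSemidef then
    (h.1.eigenvectorUnitary : Mat ι) *
      Matrix.diagonal ((↑) ∘ Real.sqrt ∘ h.1.eigenvalues) *
        star (h.1.eigenvectorUnitary : Mat ι)
  else 0

/-- Trace norm `‖X‖₁ = tr √(XᴴX)`. -/
def traceNorm {ι : Type} [Fintype ι] [DecidableEq ι] (X : Mat ι) : ℝ :=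
  (matSqrt (Xᴴ * X)).trace.re

/-- Fidelity `F(ρ,σ) = ‖√ρ√σ‖₁²`. -/
def fidelity {ι : Type} [Fintype ι] [DecidableEq ι] (ρ σ : Mat ι) : ℝ :=
  (traceNorm (matSqrt ρ * matSqrt σ)) ^ 2

/-- Purified distance `P(ρ,σ) = √(1 − F(ρ,σ))`. -/
def purifiedDist {ι : Type} [Fintype ι] [DecidableEq ι] (ρ σ : Mat ι) : ℝ :=
  Real.sqrt (1 - fidelity ρ σ)

/-- Purified channel distance `P[N,M] = sup over states ψ of P((id⊗N)ψ, (id⊗M)ψ)`. -/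
def purifiedChannelDist {ι κ : Type} [Fintype ι] [DecidableEq ι] [Fintype κ] [DecidableEq κ]
    (L1 L2 : Mat ι →ₗ[ℂ] Mat κ) : ℝ :=
  ⨆ ψ : {ψ : Matrix (ι × ι) (ι × ι) ℂ // IsState ψ},
    purifiedDist (tensorL (LinearMap.id : Mat ι →ₗ[ℂ] Mat ι) L1 ψ.1)
      (tensorL (LinearMap.id : Mat ι →ₗ[ℂ] Mat ι) L2 ψ.1)

/-- Diamond norm `‖L‖◊ = sup over states ρ on R⊗in (R ≃ in) of ‖(id⊗L)ρ‖₁`. -/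
def diamondNorm {ι κ : Type} [Fintype ι] [DecidableEq ι] [Fintype κ] [DecidableEq κ]
    (L : Mat ι →ₗ[ℂ] Mat κ) : ℝ :=
  ⨆ ρ : {ρ : Matrix (ι × ι) (ι × ι) ℂ // IsState ρ},
    traceNorm (tensorL (LinearMap.id : Mat ι →ₗ[ℂ] Mat ι) L ρ.1)

/-- `−log₂ t`, as an extended real which is `+∞` for `t ≤ 0`. -/
def negLogE (t : ℝ) : EReal := if t ≤ 0 then ⊤ else ((-Real.logb 2 t : ℝ) : EReal)

/-- Hypothesis-testing relative entropy
`D_H^ε(ρ‖σ) = −log₂ inf{tr(Λσ) : 0 ≤ Λ ≤ 1, tr(Λρ) ≥ 1−ε}`. -/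
def DH {ι : Type} [Fintype ι] [DecidableEq ι] (ε : ℝ) (ρ σ : Mat ι) : EReal :=
  negLogE (sInf {t : ℝ | ∃ Λ : Mat ι, Λ.PosSemidef ∧ ((1 : Mat ι) - Λ).PosSemidef ∧
    1 - ε ≤ ((Λ * ρ).trace).re ∧ t = ((Λ * σ).trace).re})

/-- Channel hypothesis-testing relative entropy
`D_H^ε[N‖M] = sup over states ψ of D_H^ε((id⊗N)ψ‖(id⊗M)ψ)`. -/
def DHchan {ι κ : Type} [Fintype ι] [DecidableEq ι] [Fintype κ] [DecidableEq κ]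
    (ε : ℝ) (L1 L2 : Mat ι →ₗ[ℂ] Mat κ) : EReal :=
  ⨆ ψ : {ψ : Matrix (ι × ι) (ι × ι) ℂ // IsState ψ},
    DH ε (tensorL (LinearMap.id : Mat ι →ₗ[ℂ] Mat ι) L1 ψ.1)
      (tensorL (LinearMap.id : Mat ι →ₗ[ℂ] Mat ι) L2 ψ.1)

/-- Channel max-relative entropy `D_∞[N‖M] = D_∞(Φ^N‖Φ^M)`. -/
def DmaxChan {ι κ : Type} [Fintype ι] [DecidableEq ι] [Fintype κ]
    (L1 L2 : Mat ι →ₗ[ℂ] Mat κ) : EReal :=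
  Dmax (choiState L1) (choiState L2)

/-- Smoothed channel max-relative entropy
`D_∞^ε[N‖M] = inf{D_∞[Ñ‖M] : Ñ a channel with (1/2)P[N,Ñ] ≤ ε}`. -/
def DmaxChanSmooth {ι κ : Type} [Fintype ι] [DecidableEq ι] [Fintype κ] [DecidableEq κ]
    (ε : ℝ) (L1 L2 : Mat ι →ₗ[ℂ] Mat κ) : EReal :=
  ⨅ Nt : {Nt : Mat ι →ₗ[ℂ] Mat κ //
      IsChannel Nt ∧ 2⁻¹ * purifiedChannelDist L1 Nt ≤ ε},
    DmaxChan Nt.1 L2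

/-- A quantum superchannel: `Θ(N) = post ∘ (id_E ⊗ N) ∘ pre` for channels `pre`, `post`
and a finite-dimensional memory `E`. -/
structure Superchannel (ι1 κ1 ι2 κ2 : Type) [Fintype ι1] [DecidableEq ι1]
    [Fintype κ1] [DecidableEq κ1] [Fintype ι2] [DecidableEq ι2]
    [Fintype κ2] [DecidableEq κ2] where
  e : ℕ
  pre : Mat ι2 →ₗ[ℂ] Mat (Fin e × ι1)
  post : Mat (Fin e × κ1) →ₗ[ℂ] Mat κ2
  pre_channel : IsChannel pre
  post_channel : IsChannel post

/-- Action of a superchannel on a linear map. -/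
def Superchannel.apply {ι1 κ1 ι2 κ2 : Type} [Fintype ι1] [DecidableEq ι1]
    [Fintype κ1] [DecidableEq κ1] [Fintype ι2] [DecidableEq ι2]
    [Fintype κ2] [DecidableEq κ2] (Θ : Superchannel ι1 κ1 ι2 κ2)
    (L : Mat ι1 →ₗ[ℂ] Mat κ1) : Mat ι2 →ₗ[ℂ] Mat κ2 :=
  Θ.post ∘ₗ (tensorL (LinearMap.id : Mat (Fin Θ.e) →ₗ[ℂ] Mat (Fin Θ.e)) L) ∘ₗ Θ.pre


/-- A conditional Gibbs-preserving superchannel (distillation direction): it maps every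
conditionally thermalizing channel `T^β ⊗ Q̃` to a conditionally uniformly mixing channel
`R^π_m ⊗ Q̃'` for some side channel `Q̃'`. -/
def IsCGPSdist {a' b' a b m d' d : ℕ} (γ : Mat (Fin a))
    (Θ : Superchannel (Fin a' × Fin b') (Fin a × Fin b) (Fin m × Fin d') (Fin m × Fin d)) :
    Prop :=
  ∀ Qt : Mat (Fin b') →ₗ[ℂ] Mat (Fin b), IsChannel Qt →
    ∃ Qt' : Mat (Fin d') →ₗ[ℂ] Mat (Fin d), IsChannel Qt' ∧
      Θ.apply (tensorL (replacer γ) Qt) = tensorL (replacer (uniformState m)) Qt'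

/-- A conditional Gibbs-preserving superchannel (formation direction): it maps every
conditionally uniformly mixing channel `R^π_m ⊗ Q̃` to a conditionally thermalizing channel
`T^β ⊗ Q̃'` for some side channel `Q̃'`. -/
def IsCGPScost {a' b' a b m d' d : ℕ} (γ : Mat (Fin a))
    (Θ : Superchannel (Fin m × Fin d') (Fin m × Fin d) (Fin a' × Fin b') (Fin a × Fin b)) :
    Prop :=
  ∀ Qt : Mat (Fin d') →ₗ[ℂ] Mat (Fin d), IsChannel Qt →
    ∃ Qt' : Mat (Fin b') →ₗ[ℂ] Mat (Fin b), IsChannel Qt' ∧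
      Θ.apply (tensorL (replacer (uniformState m)) Qt) = tensorL (replacer γ) Qt'

/-- One-shot conditional athermality distillation yield `Dist^{(1,ε)}(N, T^β)`:
the worst case over side channels `Q` of the largest `log₂ m` such that some conditional
Gibbs-preserving superchannel converts `(N, T^β⊗Q)` into `(id_m⊗Q', R^π_m⊗Q')`
within purified channel distance `ε`. -/
def DistOneShot {a' b' a b : ℕ} (N : Mat (Fin a' × Fin b') →ₗ[ℂ] Mat (Fin a × Fin b))
    (γ : Mat (Fin a)) (ε : ℝ) : EReal :=
  ⨅ Q : {Q : Mat (Fin b') →ₗ[ℂ] Mat (Fin b) // IsChannel Q},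
    sSup {x : EReal | ∃ m d' d : ℕ, ∃ Q' : Mat (Fin d') →ₗ[ℂ] Mat (Fin d),
      ∃ Θ : Superchannel (Fin a' × Fin b') (Fin a × Fin b) (Fin m × Fin d') (Fin m × Fin d),
        IsChannel Q' ∧ IsCGPSdist γ Θ ∧
        Θ.apply (tensorL (replacer γ) Q.1) = tensorL (replacer (uniformState m)) Q' ∧
        purifiedChannelDist
          (tensorL (LinearMap.id : Mat (Fin m) →ₗ[ℂ] Mat (Fin m)) Q') (Θ.apply N) ≤ ε ∧
        x = ((Real.logb 2 (m : ℝ) : ℝ) : EReal)}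

/-- One-shot conditional athermality formation cost `Cost^{(1,ε)}(N, T^β)`:
the best case over side channels `Q` of the least `log₂ m` such that some conditional
Gibbs-preserving superchannel converts `(id_m⊗Q'', R^π_m⊗Q'')` into `(N, T^β⊗Q)`
within purified channel distance `ε`. -/
def CostOneShot {a' b' a b : ℕ} (N : Mat (Fin a' × Fin b') →ₗ[ℂ] Mat (Fin a × Fin b))
    (γ : Mat (Fin a)) (ε : ℝ) : EReal :=
  ⨅ Q : {Q : Mat (Fin b') →ₗ[ℂ] Mat (Fin b) // IsChannel Q},
    sInf {x : EReal | ∃ m d' d : ℕ, ∃ Q'' : Mat (Fin d') →ₗ[ℂ] Mat (Fin d),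
      ∃ Θ : Superchannel (Fin m × Fin d') (Fin m × Fin d) (Fin a' × Fin b') (Fin a × Fin b),
        IsChannel Q'' ∧ IsCGPScost γ Θ ∧
        Θ.apply (tensorL (replacer (uniformState m)) Q'') = tensorL (replacer γ) Q.1 ∧
        purifiedChannelDist N
          (Θ.apply (tensorL (LinearMap.id : Mat (Fin m) →ₗ[ℂ] Mat (Fin m)) Q'')) ≤ ε ∧
        x = ((Real.logb 2 (m : ℝ) : ℝ) : EReal)}


/-- A bipartite channel `N : A'B' → AB` is no-signaling (semicausal) from `A'` to `B`:
`tr_A ∘ N = tr_{A'} ⊗ Q` for some channel `Q : B' → B`. -/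
def NoSignalFstToSnd {ιA' ιB' κA κB : Type} [Fintype ιA'] [DecidableEq ιA']
    [Fintype ιB'] [DecidableEq ιB'] [Fintype κA] [Fintype κB]
    (N : Mat (ιA' × ιB') →ₗ[ℂ] Mat (κA × κB)) : Prop :=
  ∃ Q : Mat ιB' →ₗ[ℂ] Mat κB, IsChannel Q ∧
    ∀ X : Mat (ιA' × ιB'), trFst (N X) = Q (trFst X)

end

lemma sumperm {ι1 ι2 ι3 ι4 ι5 : Type} [Fintype ι1] [Fintype ι2] [Fintype ι3] [Fintype ι4]
    [Fintype ι5] (f : ι1 → ι2 → ι3 → ι4 → ι5 → ℂ) :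
    ∑ a, ∑ b, ∑ c, ∑ d, ∑ k, f a b c d k = ∑ k, ∑ a, ∑ b, ∑ c, ∑ d, f a b c d k := by
  calc ∑ a, ∑ b, ∑ c, ∑ d, ∑ k, f a b c d k
      = ∑ a, ∑ b, ∑ c, ∑ k, ∑ d, f a b c d k :=
        Finset.sum_congr rfl fun a _ => Finset.sum_congr rfl fun b _ =>
          Finset.sum_congr rfl fun c _ => Finset.sum_comm
    _ = ∑ a, ∑ b, ∑ k, ∑ c, ∑ d, f a b c d k :=
        Finset.sum_congr rfl fun a _ => Finset.sum_congr rfl fun b _ => Finset.sum_comm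
    _ = ∑ a, ∑ k, ∑ b, ∑ c, ∑ d, f a b c d k :=
        Finset.sum_congr rfl fun a _ => Finset.sum_comm
    _ = ∑ k, ∑ a, ∑ b, ∑ c, ∑ d, f a b c d k := Finset.sum_comm

lemma trFst_isHermitian {dA dB : ℕ} {ρ : Matrix (Fin dA × Fin dB) (Fin dA × Fin dB) ℂ}
    (h : ρ.IsHermitian) : (trFst ρ).IsHermitian := by
  ext i j
  simp only [conjTranspose_apply, trFst, of_apply, star_sum]
  exact Finset.sum_congr rfl fun k _ => h.apply (k, i) (k, j)

open scoped MatrixOrder in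
lemma key_psd {dA dB : ℕ} (ρ : Matrix (Fin dA × Fin dB) (Fin dA × Fin dB) ℂ)
    (hherm : ρ.IsHermitian) (hppt : (ptransposeSnd ρ).PosSemidef) :
    ((1 : Mat (Fin dA)) ⊗ₖ trFst ρ - ρ).PosSemidef := by
  classical
  set S := CFC.sqrt (ptransposeSnd ρ) with hSdef
  have hSh : S.IsHermitian := (Matrix.nonneg_iff_posSemidef.mp (CFC.sqrt_nonneg _)).1
  have hent : ∀ a b a' b', ρ (a,b) (a',b') = ∑ k, S (a,b') k * star (S (a',b) k) := by
    intro a b a' b'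
    calc ρ (a,b) (a',b') = (ptransposeSnd ρ) (a,b') (a',b) := rfl
      _ = (S * S) (a,b') (a',b) := by rw [CFC.sqrt_mul_sqrt_self _ hppt.nonneg]
      _ = ∑ k, S (a,b') k * S k (a',b) := Matrix.mul_apply
      _ = ∑ k, S (a,b') k * star (S (a',b) k) := by simp only [hSh.apply]
  rw [posSemidef_iff_dotProduct_mulVec]
  constructor
  · apply Matrix.IsHermitian.sub _ hherm
    have hB := trFst_isHermitian hherm
    ext p q
    simp only [conjTranspose_apply, kroneckerMap_apply, star_mul']
    rw [hB.apply, one_apply, one_apply]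
    by_cases h : p.1 = q.1 <;> simp [h, eq_comm]
  · intro x
    set C : (Fin dA × Fin dB) → Fin dA → Fin dA → ℂ :=
      fun k a a' => ∑ b, x (a, b) * S (a', b) k with hC
    have hz0 : star x ⬝ᵥ (((1 : Mat (Fin dA)) ⊗ₖ trFst ρ - ρ) *ᵥ x)
        = (∑ p, ∑ q, star (x p) * (((1 : Mat (Fin dA)) ⊗ₖ trFst ρ) p q * x q))
          - (∑ p, ∑ q, star (x p) * (ρ p q * x q)) := by
      simp [dotProduct, Matrix.mulVec, Finset.mul_sum, Matrix.sub_apply, sub_mul, mul_sub,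
        Finset.sum_sub_distrib]
    have hA2 : (∑ p, ∑ q, star (x p) * (ρ p q * x q))
        = ∑ k, ∑ a, ∑ a', star (C k a a') * C k a' a := by
      calc ∑ p, ∑ q, star (x p) * (ρ p q * x q)
          = ∑ a, ∑ b, ∑ a', ∑ b', star (x (a,b)) * (ρ (a,b) (a',b') * x (a',b')) := by
            rw [Fintype.sum_prod_type]
            exact Finset.sum_congr rfl fun a _ => Finset.sum_congr rfl fun b _ => by
              rw [Fintype.sum_prod_type]
        _ = ∑ a, ∑ b, ∑ a', ∑ b', ∑ k,
              (star (x (a,b)) * star (S (a',b) k)) * (x (a',b') * S (a,b') k) := by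
            refine Finset.sum_congr rfl fun a _ => Finset.sum_congr rfl fun b _ =>
              Finset.sum_congr rfl fun a' _ => Finset.sum_congr rfl fun b' _ => ?_
            rw [hent, Finset.sum_mul, Finset.mul_sum]
            exact Finset.sum_congr rfl fun k _ => by ring
        _ = ∑ k, ∑ a, ∑ b, ∑ a', ∑ b',
              (star (x (a,b)) * star (S (a',b) k)) * (x (a',b') * S (a,b') k) := sumperm _
        _ = ∑ k, ∑ a, ∑ a', ∑ b, ∑ b',
              (star (x (a,b)) * star (S (a',b) k)) * (x (a',b') * S (a,b') k) :=
            Finset.sum_congr rfl fun k _ => Finset.sum_congr rfl fun a _ => Finset.sum_comm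
        _ = ∑ k, ∑ a, ∑ a', star (C k a a') * C k a' a := by
            refine Finset.sum_congr rfl fun k _ => Finset.sum_congr rfl fun a _ =>
              Finset.sum_congr rfl fun a' _ => ?_
            rw [show star (C k a a') = ∑ b, star (x (a,b)) * star (S (a',b) k) by
              simp [hC, star_sum, star_mul']]
            rw [Finset.sum_mul_sum]
    have hA1 : (∑ p, ∑ q, star (x p) * (((1 : Mat (Fin dA)) ⊗ₖ trFst ρ) p q * x q))
        = ∑ k, ∑ a, ∑ a', star (C k a a') * C k a a' := by
      calc ∑ p, ∑ q, star (x p) * (((1 : Mat (Fin dA)) ⊗ₖ trFst ρ) p q * x q)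
          = ∑ a, ∑ b, ∑ b', star (x (a,b)) * (trFst ρ b b' * x (a,b')) := by
            rw [Fintype.sum_prod_type]
            refine Finset.sum_congr rfl fun a _ => Finset.sum_congr rfl fun b _ => ?_
            rw [Fintype.sum_prod_type, Finset.sum_comm]
            refine Finset.sum_congr rfl fun b' _ => ?_
            simp [kroneckerMap_apply, one_apply, ite_mul, mul_ite]
        _ = ∑ a, ∑ b, ∑ b', ∑ a0, ∑ k,
              (star (x (a,b)) * star (S (a0,b) k)) * (x (a,b') * S (a0,b') k) := by
            refine Finset.sum_congr rfl fun a _ => Finset.sum_congr rfl fun b _ =>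
              Finset.sum_congr rfl fun b' _ => ?_
            have : trFst ρ b b' = ∑ a0, ∑ k, S (a0,b') k * star (S (a0,b) k) := by
              simp only [trFst, of_apply]
              exact Finset.sum_congr rfl fun a0 _ => hent a0 b a0 b'
            rw [this, Finset.sum_mul, Finset.mul_sum]
            refine Finset.sum_congr rfl fun a0 _ => ?_
            rw [Finset.sum_mul, Finset.mul_sum]
            exact Finset.sum_congr rfl fun k _ => by ring
        _ = ∑ k, ∑ a, ∑ b, ∑ b', ∑ a0,
              (star (x (a,b)) * star (S (a0,b) k)) * (x (a,b') * S (a0,b') k) := sumperm _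
        _ = ∑ k, ∑ a, ∑ b, ∑ a0, ∑ b',
              (star (x (a,b)) * star (S (a0,b) k)) * (x (a,b') * S (a0,b') k) :=
            Finset.sum_congr rfl fun k _ => Finset.sum_congr rfl fun a _ =>
              Finset.sum_congr rfl fun b _ => Finset.sum_comm
        _ = ∑ k, ∑ a, ∑ a0, ∑ b, ∑ b',
              (star (x (a,b)) * star (S (a0,b) k)) * (x (a,b') * S (a0,b') k) :=
            Finset.sum_congr rfl fun k _ => Finset.sum_congr rfl fun a _ => Finset.sum_comm
        _ = ∑ k, ∑ a, ∑ a0, star (C k a a0) * C k a a0 := by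
            refine Finset.sum_congr rfl fun k _ => Finset.sum_congr rfl fun a _ =>
              Finset.sum_congr rfl fun a0 _ => ?_
            rw [show star (C k a a0) = ∑ b, star (x (a,b)) * star (S (a0,b) k) by
              simp [hC, star_sum, star_mul']]
            rw [Finset.sum_mul_sum]
    rw [hz0, hA1, hA2]
    set N := ∑ k, ∑ a, ∑ a', star (C k a a') * C k a a' with hN
    set T := ∑ k, ∑ a, ∑ a', star (C k a a') * C k a' a with hT
    have hdd : (0:ℂ) ≤ (N - T) + (N - T) := by
      have key : ∑ k, ∑ a : Fin dA, ∑ a' : Fin dA,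
          (C k a a' - C k a' a) * star (C k a a' - C k a' a) = (N - T) + (N - T) := by
        have expand : ∀ k, ∑ a : Fin dA, ∑ a' : Fin dA,
            (C k a a' - C k a' a) * star (C k a a' - C k a' a)
            = ((∑ a, ∑ a', C k a a' * star (C k a a')) + ∑ a, ∑ a', C k a' a * star (C k a' a))
              - (∑ a, ∑ a', C k a a' * star (C k a' a))
              - (∑ a, ∑ a', C k a' a * star (C k a a')) := by
          intro k
          simp only [← Finset.sum_add_distrib, ← Finset.sum_sub_distrib]
          refine Finset.sum_congr rfl fun a _ => Finset.sum_congr rfl fun a' _ => ?_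
          rw [star_sub]; ring
        calc ∑ k, ∑ a : Fin dA, ∑ a' : Fin dA,
            (C k a a' - C k a' a) * star (C k a a' - C k a' a)
            = ∑ k, (((∑ a, ∑ a', C k a a' * star (C k a a'))
                + ∑ a, ∑ a', C k a' a * star (C k a' a))
              - (∑ a, ∑ a', C k a a' * star (C k a' a))
              - (∑ a, ∑ a', C k a' a * star (C k a a'))) :=
              Finset.sum_congr rfl fun k _ => expand k
          _ = (N - T) + (N - T) := by
              rw [Finset.sum_sub_distrib, Finset.sum_sub_distrib, Finset.sum_add_distrib]
              have e1 : ∑ k, ∑ a, ∑ a', C k a a' * star (C k a a') = N := by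
                refine Finset.sum_congr rfl fun k _ => Finset.sum_congr rfl fun a _ =>
                  Finset.sum_congr rfl fun a' _ => mul_comm _ _
              have e2 : ∑ k, ∑ a, ∑ a', C k a' a * star (C k a' a) = N := by
                rw [hN]
                refine Finset.sum_congr rfl fun k _ => ?_
                rw [Finset.sum_comm]
                exact Finset.sum_congr rfl fun a _ => Finset.sum_congr rfl fun a' _ =>
                  mul_comm _ _
              have e3 : ∑ k, ∑ a, ∑ a', C k a' a * star (C k a a') = T := by
                refine Finset.sum_congr rfl fun k _ => Finset.sum_congr rfl fun a _ =>
                  Finset.sum_congr rfl fun a' _ => mul_comm _ _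
              have e4 : ∑ k, ∑ a, ∑ a', C k a a' * star (C k a' a) = T := by
                rw [hT]
                refine Finset.sum_congr rfl fun k _ => ?_
                rw [Finset.sum_comm]
                exact Finset.sum_congr rfl fun a _ => Finset.sum_congr rfl fun a' _ =>
                  mul_comm _ _
              rw [e1, e2, e3, e4]; ring
      rw [← key]
      refine Finset.sum_nonneg fun k _ => Finset.sum_nonneg fun a _ =>
        Finset.sum_nonneg fun a' _ => mul_star_self_nonneg _
    have h2 : N - T = (2⁻¹:ℂ) * ((N - T) + (N - T)) := by ring
    rw [h2]
    refine mul_nonneg ?_ hdd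
    rw [show ((2:ℂ))⁻¹ = ((2⁻¹:ℝ):ℂ) by norm_num]
    exact_mod_cast (by norm_num : (0:ℝ) ≤ 2⁻¹)

/-- For every bipartite PPT state `ρ` on `ℂ^{dA}⊗ℂ^{dB}`, the down-arrow
conditional min-entropy is nonnegative: `S↓_∞(A|B)_ρ ≥ 0`. -/
theorem ppt_state_condMinDown_nonneg
    {dA dB : ℕ} [NeZero dA] [NeZero dB]
    (ρ : Matrix (Fin dA × Fin dB) (Fin dA × Fin dB) ℂ)
    (hρ : IsState ρ) (hPPT : IsPPT ρ) :
    (0 : EReal) ≤ condMinDown ρ := by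
  have hkey := key_psd ρ hρ.1.1 hPPT
  have hmem : (0 : EReal) ∈ {x : EReal | ∃ l : ℝ, 0 ≤ l ∧
      (((l : ℝ) : ℂ) • ((1 : Mat (Fin dA)) ⊗ₖ trFst ρ) - ρ).PosSemidef ∧
      x = ((Real.logb 2 l : ℝ) : EReal)} := by
    refine ⟨1, zero_le_one, ?_, by simp [Real.logb_one]⟩
    simpa using hkey
  have hle : Dmax ρ ((1 : Mat (Fin dA)) ⊗ₖ trFst ρ) ≤ 0 := sInf_le hmem
  exact EReal.le_neg_of_le_neg (by simpa using hle)
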